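/- arXiv:2601.13080 — 2 statements merged into one kernel-verified Lean document; each statement's English description precedes it below -/
import Mathlib

section
/- The logarithmic mean is concave on (0,∞)×(0,∞): for all u₁,v₁,u₂,v₂ > 0 and t ∈ [0,1], θ(t·u₁ + (1−t)·u₂, t·v₁ + (1−t)·v₂) ≥ t·θ(u₁,v₁) + (1−t)·θ(u₂,v₂). -/
/-- The logarithmic mean. -/
noncomputable def logMean (u v : ℝ) : ℝ :=
  if u = v then v else (u - v) / (Real.log u - Real.log v)

open Real MeasureTheory

lemma cont_aux {u v : ℝ} (hu : 0 < u) (hv : 0 < v) :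
    Continuous fun s : ℝ => u ^ s * v ^ (1 - s) := by
  have : (fun s : ℝ => u ^ s * v ^ (1 - s)) =
      fun s : ℝ => Real.exp (Real.log u * s) * Real.exp (Real.log v * (1 - s)) := by
    funext s; rw [Real.rpow_def_of_pos hu, Real.rpow_def_of_pos hv]
  rw [this]; fun_prop

lemma intInt_aux {u v : ℝ} (hu : 0 < u) (hv : 0 < v) :
    IntervalIntegrable (fun s : ℝ => u ^ s * v ^ (1 - s)) volume 0 1 :=
  (cont_aux hu hv).intervalIntegrable 0 1

lemma logMean_eq_integral {u v : ℝ} (hu : 0 < u) (hv : 0 < v) :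
    logMean u v = ∫ s in (0:ℝ)..1, u ^ s * v ^ (1 - s) := by
  rcases eq_or_ne u v with rfl | h
  · simp only [logMean, if_pos rfl]
    have : (fun s : ℝ => u ^ s * u ^ (1 - s)) = fun _ : ℝ => u := by
      funext s; rw [← Real.rpow_add hu]; simp
    rw [this]; simp
  · have hL : Real.log u - Real.log v ≠ 0 := by
      intro hc
      exact h (Real.log_injOn_pos (Set.mem_Ioi.mpr hu) (Set.mem_Ioi.mpr hv)
        (by linarith [sub_eq_zero.mp hc]))
    set L := Real.log u - Real.log v with hLdef
    have key : (fun s : ℝ => u ^ s * v ^ (1 - s)) = fun s : ℝ => v * Real.exp (s * L) := by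
      funext s
      rw [Real.rpow_def_of_pos hu, Real.rpow_def_of_pos hv, ← Real.exp_add]
      have : v * Real.exp (s * L) = Real.exp (Real.log v + s * L) := by
        rw [Real.exp_add, Real.exp_log hv]
      rw [this]; congr 1; rw [hLdef]; ring
    rw [key, intervalIntegral.integral_const_mul,
      intervalIntegral.integral_comp_mul_right (fun x => Real.exp x) hL, integral_exp]
    have hexpL : Real.exp L = u / v := by
      rw [hLdef, Real.exp_sub, Real.exp_log hu, Real.exp_log hv]
    simp only [logMean, if_neg h, zero_mul, one_mul, Real.exp_zero, smul_eq_mul, hexpL]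
    field_simp
    ring_nf
    rw [← hLdef]
    exact mul_inv_cancel₀ hL

lemma pos_combo {a b t : ℝ} (ha : 0 < a) (hb : 0 < b) (ht0 : 0 ≤ t) (ht1 : t ≤ 1) :
    0 < t * a + (1 - t) * b := by
  rcases eq_or_lt_of_le ht0 with rfl | htp
  · simpa using hb
  · have : 0 ≤ (1 - t) * b := mul_nonneg (by linarith) hb.le
    nlinarith

lemma geom_concave {u₁ v₁ u₂ v₂ t s : ℝ}
    (hu₁ : 0 < u₁) (hv₁ : 0 < v₁) (hu₂ : 0 < u₂) (hv₂ : 0 < v₂)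
    (ht0 : 0 ≤ t) (ht1 : t ≤ 1) (hs0 : 0 ≤ s) (hs1 : s ≤ 1) :
    t * (u₁ ^ s * v₁ ^ (1 - s)) + (1 - t) * (u₂ ^ s * v₂ ^ (1 - s)) ≤
      (t * u₁ + (1 - t) * u₂) ^ s * (t * v₁ + (1 - t) * v₂) ^ (1 - s) := by
  set U := t * u₁ + (1 - t) * u₂ with hU
  set V := t * v₁ + (1 - t) * v₂ with hV
  have hUpos : 0 < U := pos_combo hu₁ hu₂ ht0 ht1
  have hVpos : 0 < V := pos_combo hv₁ hv₂ ht0 ht1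
  have key : ∀ u v : ℝ, 0 < u → 0 < v →
      u ^ s * v ^ (1 - s) ≤ (s * (u / U) + (1 - s) * (v / V)) * (U ^ s * V ^ (1 - s)) := by
    intro u v hu hv
    have hgm := Real.geom_mean_le_arith_mean2_weighted (w₁ := s) (w₂ := 1 - s) (p₁ := u / U) (p₂ := v / V) hs0 (by linarith)
      (div_nonneg hu.le hUpos.le) (div_nonneg hv.le hVpos.le) (by ring)
    have hrw : (u / U) ^ s * (v / V) ^ (1 - s) =
        (u ^ s * v ^ (1 - s)) / (U ^ s * V ^ (1 - s)) := by
      rw [Real.div_rpow hu.le hUpos.le, Real.div_rpow hv.le hVpos.le]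
      field_simp
    rw [hrw] at hgm
    have hpos : 0 < U ^ s * V ^ (1 - s) :=
      mul_pos (Real.rpow_pos_of_pos hUpos s) (Real.rpow_pos_of_pos hVpos (1 - s))
    calc u ^ s * v ^ (1 - s)
        = (u ^ s * v ^ (1 - s)) / (U ^ s * V ^ (1 - s)) * (U ^ s * V ^ (1 - s)) := by
          field_simp
      _ ≤ (s * (u / U) + (1 - s) * (v / V)) * (U ^ s * V ^ (1 - s)) := by
          exact mul_le_mul_of_nonneg_right hgm hpos.le
  have h1 := key u₁ v₁ hu₁ hv₁
  have h2 := key u₂ v₂ hu₂ hv₂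
  have hsum : t * (s * (u₁ / U) + (1 - s) * (v₁ / V)) +
      (1 - t) * (s * (u₂ / U) + (1 - s) * (v₂ / V)) = 1 := by
    field_simp
    ring
  calc t * (u₁ ^ s * v₁ ^ (1 - s)) + (1 - t) * (u₂ ^ s * v₂ ^ (1 - s))
      ≤ t * ((s * (u₁ / U) + (1 - s) * (v₁ / V)) * (U ^ s * V ^ (1 - s))) +
        (1 - t) * ((s * (u₂ / U) + (1 - s) * (v₂ / V)) * (U ^ s * V ^ (1 - s))) := by
        gcongr ?_ * ?_ + ?_ * ?_ <;> linarith
    _ = (t * (s * (u₁ / U) + (1 - s) * (v₁ / V)) +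
        (1 - t) * (s * (u₂ / U) + (1 - s) * (v₂ / V))) * (U ^ s * V ^ (1 - s)) := by ring
    _ = U ^ s * V ^ (1 - s) := by rw [hsum, one_mul]

/-- The logarithmic mean is concave on (0,∞)×(0,∞). -/
theorem logMean_concave (u₁ v₁ u₂ v₂ t : ℝ)
    (hu₁ : 0 < u₁) (hv₁ : 0 < v₁) (hu₂ : 0 < u₂) (hv₂ : 0 < v₂)
    (ht : t ∈ Set.Icc (0:ℝ) 1) :
    t * logMean u₁ v₁ + (1 - t) * logMean u₂ v₂
      ≤ logMean (t * u₁ + (1 - t) * u₂) (t * v₁ + (1 - t) * v₂) := by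
  obtain ⟨ht0, ht1⟩ := ht
  have hU : 0 < t * u₁ + (1 - t) * u₂ := pos_combo hu₁ hu₂ ht0 ht1
  have hV : 0 < t * v₁ + (1 - t) * v₂ := pos_combo hv₁ hv₂ ht0 ht1
  rw [logMean_eq_integral hu₁ hv₁, logMean_eq_integral hu₂ hv₂,
    logMean_eq_integral hU hV, ← intervalIntegral.integral_const_mul,
    ← intervalIntegral.integral_const_mul, ← intervalIntegral.integral_add
      ((intInt_aux hu₁ hv₁).const_mul t) ((intInt_aux hu₂ hv₂).const_mul (1 - t))]
  apply intervalIntegral.integral_mono_on zero_le_one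
    (((intInt_aux hu₁ hv₁).const_mul t).add ((intInt_aux hu₂ hv₂).const_mul (1 - t)))
    (intInt_aux hU hV)
  intro s hs
  exact geom_concave hu₁ hv₁ hu₂ hv₂ ht0 ht1 hs.1 hs.2
end

section
/- The extended-valued function α(v,s,t) = v²/θ(s,t) (with the conventions 0²/0 = 0 and v²/0 = +∞ for v ≠ 0) is lower semicontinuous on ℝ × [0,∞)². -/
open scoped ENNReal

/-- The logarithmic mean, extended by 0 on the boundary of [0,∞)². -/
noncomputable def logMean0 (u v : ℝ) : ℝ :=
  if u ≤ 0 ∨ v ≤ 0 then 0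
  else if u = v then v else (u - v) / (Real.log u - Real.log v)

open Filter Real Topology

lemma logMean0_symm (u v : ℝ) : logMean0 u v = logMean0 v u := by
  unfold logMean0
  by_cases h : u ≤ 0 ∨ v ≤ 0
  · rw [if_pos h, if_pos h.symm]
  · rw [if_neg h, if_neg (fun hh : v ≤ 0 ∨ u ≤ 0 => h hh.symm)]
    by_cases he : u = v
    · rw [if_pos he, if_pos he.symm, he]
    · rw [if_neg he, if_neg (Ne.symm he), ← neg_sub v u, ← neg_sub (Real.log v), neg_div_neg_eq]

lemma logMean0_eq_of_lt {u v : ℝ} (hu : 0 < u) (h : u < v) :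
    logMean0 u v = (v - u) / (Real.log v - Real.log u) := by
  unfold logMean0
  rw [if_neg (by push_neg; exact ⟨hu, hu.trans h⟩), if_neg h.ne,
    ← neg_sub v u, ← neg_sub (Real.log v), neg_div_neg_eq]

lemma logMean0_bounds {u v : ℝ} (hu : 0 < u) (h : u < v) :
    u ≤ logMean0 u v ∧ logMean0 u v ≤ v := by
  have hv : 0 < v := hu.trans h
  have hlog : Real.log u < Real.log v := Real.log_lt_log hu h
  have hd : 0 < Real.log v - Real.log u := by linarith
  rw [logMean0_eq_of_lt hu h]
  constructor
  · rw [le_div_iff₀ hd]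
    have h1 : Real.log (v / u) ≤ v / u - 1 := Real.log_le_sub_one_of_pos (by positivity)
    rw [Real.log_div hv.ne' hu.ne'] at h1
    have h2 : v / u * u = v := div_mul_cancel₀ _ hu.ne'
    nlinarith
  · rw [div_le_iff₀ hd]
    have h1 : Real.log (u / v) ≤ u / v - 1 := Real.log_le_sub_one_of_pos (by positivity)
    rw [Real.log_div hu.ne' hv.ne'] at h1
    have h2 : u / v * v = u := div_mul_cancel₀ _ hv.ne'
    nlinarith

lemma min_le_logMean0 {u v : ℝ} (hu : 0 < u) (hv : 0 < v) : min u v ≤ logMean0 u v := by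
  rcases lt_trichotomy u v with h | h | h
  · exact (min_le_left u v).trans (logMean0_bounds hu h).1
  · simp [logMean0, h, not_or, hv.not_ge]
  · rw [logMean0_symm]
    exact (min_le_right u v).trans (logMean0_bounds hv h).1

lemma logMean0_le_max {u v : ℝ} (hu : 0 < u) (hv : 0 < v) : logMean0 u v ≤ max u v := by
  rcases lt_trichotomy u v with h | h | h
  · exact (logMean0_bounds hu h).2.trans (le_max_right u v)
  · simp [logMean0, h, not_or, hv.not_ge]
  · rw [logMean0_symm]
    exact (logMean0_bounds hv h).2.trans (le_max_left u v)

lemma logMean0_pos {u v : ℝ} (hu : 0 < u) (hv : 0 < v) : 0 < logMean0 u v :=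
  lt_of_lt_of_le (lt_min hu hv) (min_le_logMean0 hu hv)

lemma logMean0_nonneg (u v : ℝ) : 0 ≤ logMean0 u v := by
  by_cases h : u ≤ 0 ∨ v ≤ 0
  · simp [logMean0, h]
  · push_neg at h
    exact (logMean0_pos h.1 h.2).le

lemma logMean0_le_max' (u v : ℝ) : logMean0 u v ≤ max (max u v) 0 := by
  by_cases h : u ≤ 0 ∨ v ≤ 0
  · simp [logMean0, h]
  · push_neg at h
    exact (logMean0_le_max h.1 h.2).trans (le_max_left _ _)

lemma logMean0_continuousAt {u v : ℝ} (hu : 0 < u) (hv : 0 < v) :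
    ContinuousAt (fun q : ℝ × ℝ => logMean0 q.1 q.2) (u, v) := by
  by_cases he : u = v
  · subst he
    have hval : logMean0 u u = u := by simp [logMean0, not_or, hu.not_ge]
    rw [ContinuousAt, hval]
    have hmem : {q : ℝ × ℝ | 0 < q.1 ∧ 0 < q.2} ∈ 𝓝 ((u, u) : ℝ × ℝ) :=
      ((isOpen_lt continuous_const continuous_fst).inter
        (isOpen_lt continuous_const continuous_snd)).mem_nhds ⟨hu, hu⟩
    refine tendsto_of_tendsto_of_tendsto_of_le_of_le'
      (g := fun q : ℝ × ℝ => min q.1 q.2) (h := fun q : ℝ × ℝ => max q.1 q.2) ?_ ?_ ?_ ?_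
    · have := (continuous_fst.min continuous_snd).tendsto ((u, u) : ℝ × ℝ)
      simpa using this
    · have := (continuous_fst.max continuous_snd).tendsto ((u, u) : ℝ × ℝ)
      simpa using this
    · filter_upwards [hmem] with q hq
      exact min_le_logMean0 hq.1 hq.2
    · filter_upwards [hmem] with q hq
      exact logMean0_le_max hq.1 hq.2
  · have hne : Real.log u - Real.log v ≠ 0 := by
      intro h0
      exact he (Real.log_injOn_pos (Set.mem_Ioi.2 hu) (Set.mem_Ioi.2 hv) (by linarith))
    have hcont : ContinuousAt (fun q : ℝ × ℝ =>
        (q.1 - q.2) / (Real.log q.1 - Real.log q.2)) (u, v) := by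
      apply ContinuousAt.div
      · exact continuousAt_fst.sub continuousAt_snd
      · exact ((Real.continuousAt_log hu.ne').comp continuousAt_fst).sub
          ((Real.continuousAt_log hv.ne').comp (x := (u, v)) continuousAt_snd)
      · exact hne
    apply hcont.congr
    have hmem : {q : ℝ × ℝ | 0 < q.1 ∧ 0 < q.2 ∧ q.1 ≠ q.2} ∈ 𝓝 ((u, v) : ℝ × ℝ) := by
      refine (((isOpen_lt continuous_const continuous_fst).inter
        ((isOpen_lt continuous_const continuous_snd).inter
          (isOpen_ne_fun continuous_fst continuous_snd))).mem_nhds ⟨hu, hv, he⟩)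
    filter_upwards [hmem] with q hq
    simp [logMean0, not_or, hq.1.not_ge, hq.2.1.not_ge, hq.2.2]

lemma logMean0_tendsto_zero_left (t : ℝ) :
    Filter.Tendsto (fun q : ℝ × ℝ => logMean0 q.1 q.2) (𝓝 ((0 : ℝ), t)) (𝓝 0) := by
  rcases lt_trichotomy t 0 with ht | ht | ht
  · -- eventually q.2 < 0, logMean0 = 0
    have hmem : {q : ℝ × ℝ | q.2 < 0} ∈ 𝓝 ((0 : ℝ), t) :=
      (isOpen_lt continuous_snd continuous_const).mem_nhds ht
    refine tendsto_const_nhds.congr' ?_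
    filter_upwards [hmem] with q hq
    simp [logMean0, Or.inr hq.le]
  · -- t = 0 : squeeze with max (max q.1 q.2) 0
    subst ht
    refine tendsto_of_tendsto_of_tendsto_of_le_of_le
      (tendsto_const_nhds) ?_ (fun q => logMean0_nonneg q.1 q.2)
      (fun q => logMean0_le_max' q.1 q.2)
    have hc : Continuous (fun q : ℝ × ℝ => max (max q.1 q.2) (0 : ℝ)) := by fun_prop
    have := hc.tendsto (((0 : ℝ), (0 : ℝ)) : ℝ × ℝ)
    simpa using this
  · -- t > 0 : ε-δ
    rw [Metric.tendsto_nhds]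
    intro ε hε
    set δ : ℝ := (t / 2) * Real.exp (-(2 * t / ε)) with hδ
    have hδpos : 0 < δ := by positivity
    have hδle : δ ≤ t / 2 := by
      have : Real.exp (-(2 * t / ε)) ≤ 1 := Real.exp_le_one_iff.2 (neg_nonpos.2 (by positivity))
      nlinarith
    have hlogδ : Real.log δ = Real.log (t / 2) - 2 * t / ε := by
      rw [hδ, Real.log_mul (by positivity) (Real.exp_ne_zero _), Real.log_exp]
      ring
    have hmem : {q : ℝ × ℝ | q.1 < δ ∧ t / 2 < q.2 ∧ q.2 < 2 * t} ∈ 𝓝 ((0 : ℝ), t) := by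
      refine ((isOpen_lt continuous_fst continuous_const).inter
        ((isOpen_lt continuous_const continuous_snd).inter
          (isOpen_lt continuous_snd continuous_const))).mem_nhds
        ⟨hδpos, show t / 2 < t by linarith, show t < 2 * t by linarith⟩
    filter_upwards [hmem] with q hq
    obtain ⟨h1, h2, h3⟩ := hq
    rw [Real.dist_eq, abs_of_nonneg (by rw [sub_zero]; exact logMean0_nonneg _ _), sub_zero]
    by_cases hq1 : q.1 ≤ 0
    · simp [logMean0, Or.inl hq1, hε]
    · push_neg at hq1
      have hlt : q.1 < q.2 := lt_of_lt_of_le h1 (hδle.trans h2.le)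
      rw [logMean0_eq_of_lt hq1 hlt]
      have hD : 2 * t / ε < Real.log q.2 - Real.log q.1 := by
        have hl1 : Real.log q.1 < Real.log δ := Real.log_lt_log hq1 h1
        have hl2 : Real.log (t / 2) < Real.log q.2 := Real.log_lt_log (by linarith) h2
        rw [hlogδ] at hl1
        linarith
      have hDpos : 0 < Real.log q.2 - Real.log q.1 := lt_trans (by positivity) hD
      rw [div_lt_iff₀ hDpos]
      have hmul : ε * (2 * t / ε) = 2 * t := by field_simp
      nlinarith [mul_lt_mul_of_pos_left hD hε]

lemma logMean0_tendsto_zero {s t : ℝ} (h : s ≤ 0 ∨ t ≤ 0) :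
    Filter.Tendsto (fun q : ℝ × ℝ => logMean0 q.1 q.2) (𝓝 (s, t)) (𝓝 0) := by
  rcases lt_trichotomy s 0 with hs | hs | hs
  · have hmem : {q : ℝ × ℝ | q.1 < 0} ∈ 𝓝 ((s : ℝ), t) :=
      (isOpen_lt continuous_fst continuous_const).mem_nhds hs
    refine tendsto_const_nhds.congr' ?_
    filter_upwards [hmem] with q hq
    simp [logMean0, Or.inl hq.le]
  · subst hs; exact logMean0_tendsto_zero_left t
  · have ht : t ≤ 0 := h.resolve_left (not_le.2 hs)
    rcases lt_or_eq_of_le ht with ht' | ht'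
    · have hmem : {q : ℝ × ℝ | q.2 < 0} ∈ 𝓝 ((s : ℝ), t) :=
        (isOpen_lt continuous_snd continuous_const).mem_nhds ht'
      refine tendsto_const_nhds.congr' ?_
      filter_upwards [hmem] with q hq
      simp [logMean0, Or.inr hq.le]
    · subst ht'
      have hswap : Filter.Tendsto (fun q : ℝ × ℝ => q.swap) (𝓝 ((s : ℝ), (0:ℝ)))
          (𝓝 ((0 : ℝ), s)) := continuous_swap.tendsto _
      have := (logMean0_tendsto_zero_left s).comp hswap
      refine this.congr fun q => ?_
      exact (logMean0_symm q.2 q.1)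

/-- The extended-valued action density α(v,s,t) = v²/θ(s,t), with the conventions
    0²/0 = 0 and v²/0 = +∞ for v ≠ 0. -/
noncomputable def alphaE (v s t : ℝ) : ℝ≥0∞ :=
  if logMean0 s t = 0 then (if v = 0 then 0 else ⊤)
  else ENNReal.ofReal (v ^ 2 / logMean0 s t)

/-- α is lower semicontinuous on ℝ × [0,∞)². -/
theorem alphaE_lowerSemicontinuous :
    LowerSemicontinuousOn (fun p : ℝ × ℝ × ℝ => alphaE p.1 p.2.1 p.2.2)
      {p : ℝ × ℝ × ℝ | 0 ≤ p.2.1 ∧ 0 ≤ p.2.2} := by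
  rintro ⟨v, s, t⟩ hp
  by_cases hθ : logMean0 s t = 0
  · by_cases hv : v = 0
    · -- value is 0, trivially LSC
      intro y hy
      simp [alphaE, hθ, hv] at hy
    · -- value is ⊤
      intro y hy
      have hy' : y ≠ ⊤ := by
        simp [alphaE, hθ, hv] at hy
        exact hy.ne
      set M : ℝ := y.toReal + 1 with hM
      have hM1 : 1 ≤ M := by simp [hM, ENNReal.toReal_nonneg]
      have hyM : y < ENNReal.ofReal M := by
        rw [← ENNReal.ofReal_toReal hy']
        exact ENNReal.ofReal_lt_ofReal_iff (by linarith) |>.2 (by simp [hM])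
      have hst : s ≤ 0 ∨ t ≤ 0 := by
        by_contra hc
        push_neg at hc
        exact (logMean0_pos hc.1 hc.2).ne' hθ
      set c : ℝ := v ^ 2 / 4 with hc
      have hcpos : 0 < c := by positivity
      set ε : ℝ := c / M with hε
      have hεpos : 0 < ε := by positivity
      -- eventually x.1 ^ 2 > c
      have hev1 : ∀ᶠ x : ℝ × ℝ × ℝ in 𝓝 (v, s, t), c < x.1 ^ 2 := by
        have hco : ContinuousAt (fun x : ℝ × ℝ × ℝ => x.1 ^ 2) (v, s, t) := by fun_prop
        have hv2 : 0 < v ^ 2 := (sq_nonneg v).lt_of_ne' (pow_ne_zero 2 hv)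
        exact hco.eventually_const_lt (show c < v ^ 2 by rw [hc]; linarith)
      -- eventually logMean0 x.2.1 x.2.2 < ε
      have hev2 : ∀ᶠ x : ℝ × ℝ × ℝ in 𝓝 (v, s, t), logMean0 x.2.1 x.2.2 < ε := by
        have h2 : Filter.Tendsto (fun x : ℝ × ℝ × ℝ => logMean0 x.2.1 x.2.2)
            (𝓝 (v, s, t)) (𝓝 0) :=
          (logMean0_tendsto_zero hst).comp (continuous_snd.tendsto _)
        exact h2.eventually_lt_const hεpos
      apply Filter.Eventually.filter_mono nhdsWithin_le_nhds
      filter_upwards [hev1, hev2] with x hx1 hx2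
      by_cases hx0 : logMean0 x.2.1 x.2.2 = 0
      · have hx1' : x.1 ≠ 0 := by intro h0; rw [h0] at hx1; nlinarith
        have htop : alphaE x.1 x.2.1 x.2.2 = ⊤ := by simp [alphaE, hx0, hx1']
        exact htop ▸ hy'.lt_top
      · have hxpos : 0 < logMean0 x.2.1 x.2.2 := (logMean0_nonneg _ _).lt_of_ne' hx0
        have hbig : M ≤ x.1 ^ 2 / logMean0 x.2.1 x.2.2 := by
          rw [le_div_iff₀ hxpos]
          calc M * logMean0 x.2.1 x.2.2 ≤ M * ε := by nlinarith
            _ = c := by rw [hε]; field_simp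
            _ ≤ x.1 ^ 2 := hx1.le
        calc y < ENNReal.ofReal M := hyM
          _ ≤ ENNReal.ofReal (x.1 ^ 2 / logMean0 x.2.1 x.2.2) := ENNReal.ofReal_le_ofReal hbig
          _ = alphaE x.1 x.2.1 x.2.2 := by rw [alphaE, if_neg hx0]
  · -- logMean0 s t > 0 : continuous here
    have hθpos : 0 < logMean0 s t := (logMean0_nonneg _ _).lt_of_ne' hθ
    have hs : 0 < s := by
      by_contra h; exact hθ (by simp [logMean0, Or.inl (not_lt.1 h)])
    have ht : 0 < t := by
      by_contra h; exact hθ (by simp [logMean0, Or.inr (not_lt.1 h)])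
    have hθcont : ContinuousAt (fun x : ℝ × ℝ × ℝ => logMean0 x.2.1 x.2.2) (v, s, t) := by
      exact ContinuousAt.comp (f := (Prod.snd : ℝ × ℝ × ℝ → ℝ × ℝ))
        (logMean0_continuousAt hs ht) continuous_snd.continuousAt
    have hg : ContinuousAt (fun x : ℝ × ℝ × ℝ =>
        ENNReal.ofReal (x.1 ^ 2 / logMean0 x.2.1 x.2.2)) (v, s, t) := by
      apply ENNReal.continuous_ofReal.continuousAt.comp
      exact ((continuousAt_fst.pow 2).div hθcont hθ)
    have heq : (fun x : ℝ × ℝ × ℝ => ENNReal.ofReal (x.1 ^ 2 / logMean0 x.2.1 x.2.2))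
        =ᶠ[𝓝 (v, s, t)] fun x => alphaE x.1 x.2.1 x.2.2 := by
      filter_upwards [hθcont.eventually_const_lt hθpos] with x hx
      rw [alphaE, if_neg hx.ne']
    exact ((hg.congr heq).continuousWithinAt).lowerSemicontinuousWithinAt
end
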